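/- arXiv:1712.04417 — 2 statements merged into one kernel-verified Lean document; each statement's English description precedes it below -/
import Mathlib

section
/- Correctness of the verification equation for a single file: Let G, G_T be commutative groups, e : G × G → G_T a map that is multiplicative in each argument and satisfies e(u^a, v) = e(u, v^a) for all integers a. Let g ∈ G, x an integer, v = g^x, α ∈ G, and for j in a finite set Q let h_j ∈ G, m_j, ν_j integers, σ_j = (h_j·α^{m_j})^x, σ = ∏_j σ_j^{ν_j}, μ = ∑_j ν_j·m_j. Then e(σ, g) = e(∏_{j∈Q} h_j^{ν_j} · α^μ, v). -/
lemma zpow_finset_sum' {G : Type*} [CommGroup G] {ι : Type*} (α : G) (s : Finset ι)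
    (f : ι → ℤ) : α ^ (∑ i ∈ s, f i) = ∏ i ∈ s, α ^ f i := by
  classical
  induction s using Finset.induction with
  | empty => simp
  | @insert _ _ hx ih => rw [Finset.sum_insert hx, Finset.prod_insert hx, zpow_add, ih]

/-- Correctness of the verification equation for a single file. -/
theorem verification_correct {G GT : Type*} [CommGroup G] [CommGroup GT]
    (e : G → G → GT)
    (hleft : ∀ u u' w : G, e (u * u') w = e u w * e u' w)
    (hright : ∀ u w w' : G, e u (w * w') = e u w * e u w')
    (hpow : ∀ (u w : G) (a : ℤ), e (u ^ a) w = e u (w ^ a))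
    {ι : Type*} (Q : Finset ι) (g : G) (x : ℤ) (v : G) (hv : v = g ^ x)
    (α : G) (h : ι → G) (m ν : ι → ℤ)
    (σj : ι → G) (hσj : ∀ j ∈ Q, σj j = (h j * α ^ (m j)) ^ x)
    (σ : G) (hσ : σ = ∏ j ∈ Q, (σj j) ^ (ν j))
    (μ : ℤ) (hμ : μ = ∑ j ∈ Q, ν j * m j) :
    e σ g = e ((∏ j ∈ Q, (h j) ^ (ν j)) * α ^ μ) v := by
  have h1 : ∀ w : G, e 1 w = 1 := by
    intro w
    have := hleft 1 1 w
    rw [mul_one] at this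
    exact left_eq_mul.mp this
  let f : G → G →* GT := fun w =>
    { toFun := fun u => e u w
      map_one' := h1 w
      map_mul' := fun u u' => hleft u u' w }
  have hfpow : ∀ (u w : G) (a : ℤ), e (u ^ a) w = e u w ^ a := fun u w a =>
    map_zpow (f w) u a
  calc e σ g = ∏ j ∈ Q, e ((σj j) ^ (ν j)) g := by
        rw [hσ]; exact map_prod (f g) _ Q
    _ = ∏ j ∈ Q, e ((h j * α ^ (m j)) ^ (ν j)) v := by
        refine Finset.prod_congr rfl fun j hj => ?_
        rw [hfpow, hσj j hj, hpow, ← hv, ← hfpow]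
    _ = e (∏ j ∈ Q, (h j * α ^ (m j)) ^ (ν j)) v := (map_prod (f v) _ Q).symm
    _ = e ((∏ j ∈ Q, (h j) ^ (ν j)) * α ^ μ) v := by
        congr 1
        rw [hμ, Finset.prod_congr rfl (fun j _ => mul_zpow (h j) (α ^ m j) (ν j)),
          Finset.prod_mul_distrib, zpow_finset_sum']
        congr 1
        exact Finset.prod_congr rfl fun j _ => by rw [← zpow_mul, mul_comm]
end

section
/- Case I extraction identity: Let G, G_T be commutative groups with a bilinear map e satisfying e(u^a, w) = e(u,w)^a and multiplicativity in the first argument, and suppose e is non-degenerate in the sense that e(u, g) = e(u', g) implies u = u'. Let g, h ∈ G, a, β, φ, μ, μ' ∈ ℤ_p (p prime), v = g^a, α = g^β·h^φ, and suppose σ, σ' ∈ G satisfy e(σ, g) = e(P·α^μ, v) and e(σ', g) = e(P·α^{μ'}, v) for some P ∈ G. If Δ = μ' − μ and φ·Δ ≠ 0 in ℤ_p, then h^a = (σ'·σ^{-1}·v^{−βΔ})^{(φΔ)^{-1}}, where exponents are computed modulo p (G has order p). -/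
/-- Exponentiation of a group element by an element of `ZMod p`. -/
def pw {p : ℕ} {G : Type*} [Monoid G] (g : G) (a : ZMod p) : G := g ^ a.val

section aux

variable {p : ℕ} [Fact p.Prime] {G : Type*} [CommGroup G] [Fintype G]

lemma pw_natCast (hG : Fintype.card G = p) (x : G) (n : ℕ) : pw x ((n : ZMod p)) = x ^ n := by
  have h1 : x ^ p = 1 := by rw [← hG]; exact pow_card_eq_one
  rw [pw, ZMod.val_natCast, ← pow_eq_pow_mod n h1]

lemma pw_add (hG : Fintype.card G = p) (x : G) (s t : ZMod p) : pw x (s + t) = pw x s * pw x t := by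
  have hst : s + t = (((s.val + t.val : ℕ)) : ZMod p) := by
    push_cast [ZMod.natCast_val, ZMod.cast_id]
    rfl
  rw [hst, pw_natCast hG, pow_add]; rfl


lemma pw_pw (hG : Fintype.card G = p) (x : G) (s t : ZMod p) : pw (pw x s) t = pw x (s * t) := by
  have hst : s * t = (((s.val * t.val : ℕ)) : ZMod p) := by
    push_cast [ZMod.natCast_val, ZMod.cast_id]
    rfl
  rw [hst, pw_natCast hG, pow_mul]; rfl

set_option linter.unusedSectionVars false in
lemma pw_zero (x : G) : pw x (0 : ZMod p) = 1 := by
  simp [pw, ZMod.val_zero]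

set_option linter.unusedSectionVars false in
lemma pw_one (x : G) : pw x (1 : ZMod p) = x := by
  haveI : Fact (1 < p) := ⟨(Fact.out : p.Prime).one_lt⟩
  simp [pw, ZMod.val_one]

set_option linter.unusedSectionVars false in
lemma pw_mul_base (x y : G) (s : ZMod p) : pw (x * y) s = pw x s * pw y s :=
  mul_pow x y s.val

lemma pw_neg_cancel (hG : Fintype.card G = p) (x : G) (s : ZMod p) : pw x s * pw x (-s) = 1 := by
  rw [← pw_add hG, add_neg_cancel, pw_zero]

end aux

/-- Case I extraction identity in the security reduction. -/
theorem caseI_extraction {p : ℕ} [Fact p.Prime] {G GT : Type*}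
    [CommGroup G] [Fintype G] (hG : Fintype.card G = p) [CommGroup GT]
    (e : G → G → GT)
    (hleft : ∀ u u' w : G, e (u * u') w = e u w * e u' w)
    (hright : ∀ u w w' : G, e u (w * w') = e u w * e u w')
    (hpow : ∀ (u w : G) (a : ZMod p), e (pw u a) w = pw (e u w) a)
    (hpow' : ∀ (u w : G) (a : ZMod p), e u (pw w a) = pw (e u w) a)
    (g : G) (hnd : ∀ u u' : G, e u g = e u' g → u = u')
    (h : G) (a β φ μ μ' : ZMod p)
    (v : G) (hv : v = pw g a) (α : G) (hα : α = pw g β * pw h φ)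
    (σ σ' P : G)
    (h1 : e σ g = e (P * pw α μ) v)
    (h2 : e σ' g = e (P * pw α μ') v)
    (Δ : ZMod p) (hΔ : Δ = μ' - μ) (hne : φ * Δ ≠ 0) :
    pw h a = pw (σ' * σ⁻¹ * pw v (-(β * Δ))) (φ * Δ)⁻¹ := by
  have he1 : e 1 g = 1 := by
    have := hleft 1 1 g
    rw [mul_one] at this
    exact left_eq_mul.mp this
  -- transfer exponent between slots: e (pw g s) v = e (pw g (s*a)) g
  have hsw : ∀ (x : G) (s : ZMod p), e (pw x s) v = e (pw x (s * a)) g := by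
    intro x s
    rw [hv, hpow', ← hpow, pw_pw hG]
  have hμ' : μ' = μ + Δ := by rw [hΔ]; ring
  have hA : e σ' g = e σ g * e (pw α Δ) v := by
    rw [h2, h1, hμ', pw_add hG, ← hleft, mul_assoc]
  have hB : e (σ' * σ⁻¹) g = e (pw α Δ) v := by
    have h3 : e (σ' * σ⁻¹) g * e σ g = e σ g * e (pw α Δ) v := by
      rw [← hleft, inv_mul_cancel_right, hA]
    rw [mul_comm (e σ g)] at h3
    exact mul_right_cancel h3
  have hαΔ : pw α Δ = pw g (β * Δ) * pw h (φ * Δ) := by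
    rw [hα, pw_mul_base, pw_pw hG, pw_pw hG]
  -- main identity in G, via nondegeneracy
  have hZ : σ' * σ⁻¹ * pw v (-(β * Δ)) = pw (pw h a) (φ * Δ) := by
    apply hnd
    rw [hleft, hB, hαΔ, hleft, hsw, hsw]
    have hvpw : pw v (-(β * Δ)) = pw g (-(β * Δ * a)) := by
      rw [hv, pw_pw hG]; ring_nf
    rw [hvpw, pw_pw hG]
    have hx : a * (φ * Δ) = φ * Δ * a := by ring
    rw [hx]
    rw [mul_right_comm, ← hleft, pw_neg_cancel hG, he1, one_mul]
  rw [hZ, pw_pw hG, mul_inv_cancel₀ hne, pw_one]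
end
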